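/- Gaussian PMI bound: fix σ² > 0, σ₀² > 0, and a maximal sample count N_max. For nonnegative integers Nᵢ, N₋ᵢ with Nᵢ + N₋ᵢ ≤ N_max, define PMI(Nᵢ, N₋ᵢ) = √(1/σ₀² + Nᵢ/σ²)·√(1/σ₀² + N₋ᵢ/σ²) / (√(1/σ₀²)·√(1/σ₀² + (Nᵢ+N₋ᵢ)/σ²)). Then (1 + N_max·σ₀²/σ²)^{−1/2} ≤ PMI(Nᵢ, N₋ᵢ) ≤ 1 + N_max·σ₀²/σ². -/

import Mathlib

/-- Gaussian PMI bound: for sample counts Nᵢ + N₋ᵢ ≤ N_max,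
(1 + N_max σ₀²/σ²)^{−1/2} ≤ PMI(Nᵢ, N₋ᵢ) ≤ 1 + N_max σ₀²/σ². -/
theorem stmt14
    (σ σ₀ : ℝ) (hσ : 0 < σ) (hσ₀ : 0 < σ₀)
    (Ni Nmi Nmax : ℕ) (hN : Ni + Nmi ≤ Nmax)
    (PMI : ℝ)
    (hPMI : PMI = Real.sqrt (1 / σ₀ ^ 2 + (Ni : ℝ) / σ ^ 2)
        * Real.sqrt (1 / σ₀ ^ 2 + (Nmi : ℝ) / σ ^ 2)
        / (Real.sqrt (1 / σ₀ ^ 2)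
            * Real.sqrt (1 / σ₀ ^ 2 + ((Ni : ℝ) + (Nmi : ℝ)) / σ ^ 2))) :
    (1 + (Nmax : ℝ) * σ₀ ^ 2 / σ ^ 2) ^ (-(1 : ℝ) / 2) ≤ PMI
    ∧ PMI ≤ 1 + (Nmax : ℝ) * σ₀ ^ 2 / σ ^ 2 := by
  have hσ2 : (0:ℝ) < σ ^ 2 := by positivity
  have hσ02 : (0:ℝ) < σ₀ ^ 2 := by positivity
  set a : ℝ := 1 / σ₀ ^ 2 with ha
  set x : ℝ := (Ni : ℝ) / σ ^ 2 with hx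
  set y : ℝ := (Nmi : ℝ) / σ ^ 2 with hy
  set M : ℝ := (Nmax : ℝ) * σ₀ ^ 2 / σ ^ 2 with hM
  have ha0 : 0 < a := by positivity
  have hx0 : 0 ≤ x := by positivity
  have hy0 : 0 ≤ y := by positivity
  have hM0 : 0 ≤ M := by positivity
  have hsum : x + y ≤ M * a := by
    have hNc : (Ni : ℝ) + (Nmi : ℝ) ≤ (Nmax : ℝ) := by exact_mod_cast hN
    have hMa : M * a = (Nmax : ℝ) / σ ^ 2 := by
      rw [hM, ha]; field_simp
    rw [hx, hy, ← add_div, hMa]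
    gcongr
  -- denominator positive
  have hden : 0 < Real.sqrt a * Real.sqrt (a + (↑Ni + ↑Nmi) / σ ^ 2) := by
    have h1 : 0 < a + (↑Ni + ↑Nmi) / σ ^ 2 := by positivity
    exact mul_pos (Real.sqrt_pos.2 ha0) (Real.sqrt_pos.2 h1)
  have hxy : a + ((Ni : ℝ) + (Nmi : ℝ)) / σ ^ 2 = a + (x + y) := by
    rw [hx, hy, ← add_div]
  have hPMI1 : 1 ≤ PMI := by
    rw [hPMI, le_div_iff₀ hden, one_mul, hxy]
    rw [← Real.sqrt_mul ha0.le, ← Real.sqrt_mul (by positivity : (0:ℝ) ≤ a + x)]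
    apply Real.sqrt_le_sqrt
    nlinarith [mul_nonneg hx0 hy0]
  constructor
  · have h1M : (1:ℝ) ≤ 1 + M := by linarith
    calc (1 + M) ^ (-(1:ℝ)/2) ≤ 1 :=
          Real.rpow_le_one_of_one_le_of_nonpos h1M (by norm_num)
      _ ≤ PMI := hPMI1
  · rw [hPMI, div_le_iff₀ hden, hxy]
    rw [← Real.sqrt_mul (by positivity : (0:ℝ) ≤ a + x)]
    have : (1 + M) * (Real.sqrt a * Real.sqrt (a + (x + y)))
        = Real.sqrt ((1 + M) ^ 2 * (a * (a + (x + y)))) := by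
      rw [Real.sqrt_mul (by positivity), Real.sqrt_sq (by linarith),
        Real.sqrt_mul ha0.le]
    rw [this]
    apply Real.sqrt_le_sqrt
    have hxysq : (x + y) ^ 2 ≤ (M * a) ^ 2 := by nlinarith
    nlinarith [sq_nonneg (x - y), mul_nonneg hM0 (mul_pos ha0 ha0).le,
      mul_nonneg hM0 (mul_nonneg ha0.le (add_nonneg hx0 hy0)),
      mul_nonneg (mul_nonneg hM0 hM0) (mul_nonneg ha0.le (add_nonneg hx0 hy0))]
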